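/- Let σ_{π₁},…,σ_{π_n} ∈ Stmt₀^ω, let σ be the composed trace with σ_t = ((σ_{π₁})_{π₁})_t; … ; ((σ_{π_n})_{π_n})_t, let X ∈ (2^{ρ̂∪υ̂})^ω, and let ζ̂ be a hyper-computation with ζ̂ ◁ combine(σ, X). Then for every 1 ≤ j ≤ n, the reduced computation ζ̂|π_j matches σ_{π_j}, i.e. ζ̂|π_j ◁ σ_{π_j}. -/

import Mathlib

namespace TSLMC

open scoped Classical

/-! ### Theories, function terms, assignments -/

/-- A theory: interpretation of function symbols, plus distinguished values true/false. -/
structure Thy (V F : Type) where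
  ε : F → List V → V
  vtrue : V
  vfalse : V

/-- Function terms over inputs `I`, cells `C` and function symbols `F`. -/
inductive FTerm (I C F : Type) : Type where
  | inp  : I → FTerm I C F
  | cell : C → FTerm I C F
  | app  : F → List (FTerm I C F) → FTerm I C F

/-- An assignment gives values to inputs and cells. -/
abbrev Assign (V I C : Type) := I ⊕ C → V

variable {V I C F Pi : Type}

/-- Evaluation of a function term under an assignment. -/
def FTerm.eval (T : Thy V F) (a : Assign V I C) : FTerm I C F → V
  | .inp i => a (.inl i)
  | .cell c => a (.inr c)
  | .app f ts => T.ε f (ts.attach.map fun t => t.1.eval T a)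
decreasing_by
  have := List.sizeOf_lt_of_mem t.2
  simp only [FTerm.app.sizeOf_spec]
  omega

/-- A predicate term is a function term evaluating only to true or false. -/
def IsPredTerm (T : Thy V F) (τ : FTerm I C F) : Prop :=
  ∀ a : Assign V I C, τ.eval T a = T.vtrue ∨ τ.eval T a = T.vfalse

/-- The theory contains (at least) equality, negation, conjunction and a true constant,
with their usual interpretations, and true ≠ false. -/
structure Ops (V F : Type) (T : Thy V F) where
  feq : F
  fneg : F
  fand : F
  ftrue : F
  heq : ∀ x y : V, T.ε feq [x, y] = if x = y then T.vtrue else T.vfalse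
  hneg : ∀ x : V, T.ε fneg [x] = if x = T.vtrue then T.vfalse else T.vtrue
  hand : ∀ x y : V, T.ε fand [x, y] = if x = T.vtrue ∧ y = T.vtrue then T.vtrue else T.vfalse
  htrue : T.ε ftrue [] = T.vtrue
  tne : T.vtrue ≠ T.vfalse

/-! ### TSL(T) formulas -/

/-- TSL(T) formulas (atoms: predicate terms and update terms `⟦c ↞ τ⟧`). -/
inductive TSL (I C F : Type) : Type where
  | pred : FTerm I C F → TSL I C F
  | upd  : C → FTerm I C F → TSL I C F
  | not  : TSL I C F → TSL I C F
  | and  : TSL I C F → TSL I C F → TSL I C F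
  | next : TSL I C F → TSL I C F
  | untl : TSL I C F → TSL I C F → TSL I C F

/-- `prevA init ζ t` is `ζ (t-1)`, with the fixed initial assignment at `t = 0`. -/
def prevA (init : Assign V I C) (ζ : ℕ → Assign V I C) : ℕ → Assign V I C
  | 0 => init
  | t + 1 => ζ t

/-- Satisfaction of a TSL(T) formula over a computation at a time point. -/
def TSL.sat (T : Thy V F) (init : Assign V I C) (ζ : ℕ → Assign V I C) :
    TSL I C F → ℕ → Prop
  | .pred τ, t => τ.eval T (ζ t) = T.vtrue
  | .upd c τ, t => τ.eval T (prevA init ζ t) = ζ t (.inr c)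
  | .not φ, t => ¬ φ.sat T init ζ t
  | .and φ ψ, t => φ.sat T init ζ t ∧ ψ.sat T init ζ t
  | .next φ, t => φ.sat T init ζ (t + 1)
  | .untl φ ψ, t => ∃ t', t ≤ t' ∧ ψ.sat T init ζ t' ∧
      ∀ t'', t ≤ t'' → t'' < t' → φ.sat T init ζ t''

/-- The list of predicate terms appearing in a TSL(T) formula. -/
def TSL.predList : TSL I C F → List (FTerm I C F)
  | .pred τ => [τ]
  | .upd _ _ => []
  | .not φ => φ.predList
  | .and φ ψ => φ.predList ++ ψ.predList
  | .next φ => φ.predList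
  | .untl φ ψ => φ.predList ++ ψ.predList

/-- The list of update terms appearing in a TSL(T) formula. -/
def TSL.updList : TSL I C F → List (C × FTerm I C F)
  | .pred _ => []
  | .upd c τ => [(c, τ)]
  | .not φ => φ.updList
  | .and φ ψ => φ.updList ++ ψ.updList
  | .next φ => φ.updList
  | .untl φ ψ => φ.updList ++ ψ.updList

/-! ### LTL -/

/-- LTL formulas over atomic propositions `A`. -/
inductive LTL (A : Type) : Type where
  | atom : A → LTL A
  | not : LTL A → LTL A
  | and : LTL A → LTL A → LTL A
  | next : LTL A → LTL A
  | untl : LTL A → LTL A → LTL A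

/-- Standard LTL satisfaction over words of sets of atomic propositions. -/
def LTL.sat (w : ℕ → Set A) : LTL A → ℕ → Prop
  | .atom a, t => a ∈ w t
  | .not φ, t => ¬ φ.sat w t
  | .and φ ψ, t => φ.sat w t ∧ ψ.sat w t
  | .next φ, t => φ.sat w (t + 1)
  | .untl φ ψ, t => ∃ t', t ≤ t' ∧ ψ.sat w t' ∧ ∀ t'', t ≤ t'' → t'' < t' → φ.sat w t''

/-- Atomic propositions: predicate terms and update terms. -/
abbrev AP (I C F : Type) := FTerm I C F ⊕ (C × FTerm I C F)

/-- The LTL formula obtained from a TSL(T) formula by treating predicate and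
update terms as atomic propositions. -/
def TSL.toLTL : TSL I C F → LTL (AP I C F)
  | .pred τ => .atom (.inl τ)
  | .upd c τ => .atom (.inr (c, τ))
  | .not φ => .not φ.toLTL
  | .and φ ψ => .and φ.toLTL ψ.toLTL
  | .next φ => .next φ.toLTL
  | .untl φ ψ => .untl φ.toLTL ψ.toLTL

/-- `SeqW T init ζ ρ υ t` is the set of predicate terms of `ρ` and update terms of `υ`
that hold at time `t` of the computation `ζ`. -/
def SeqW (T : Thy V F) (init : Assign V I C) (ζ : ℕ → Assign V I C)
    (ρ : Set (FTerm I C F)) (υ : Set (C × FTerm I C F)) : ℕ → Set (AP I C F) :=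
  fun t => {a | Sum.elim
    (fun τ => τ ∈ ρ ∧ TSL.sat T init ζ (.pred τ) t)
    (fun u => u ∈ υ ∧ TSL.sat T init ζ (.upd u.1 u.2) t) a}

/-! ### Program statements, matching, feasibility -/

/-- Basic program statements. -/
inductive Stmt0 (I C F : Type) : Type where
  | assert : FTerm I C F → Stmt0 I C F
  | assign : C → FTerm I C F → Stmt0 I C F
  | havoc : C → Stmt0 I C F

/-- Program statements: nonempty finite sequences of basic statements. -/
abbrev Stmt (I C F : Type) := {l : List (Stmt0 I C F) // l ≠ []}

/-- A computation matches a trace of basic statements at time `t`. -/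
def matchesAt (T : Thy V F) (init : Assign V I C) (ζ : ℕ → Assign V I C)
    (σ : ℕ → Stmt0 I C F) (t : ℕ) : Prop :=
  match σ t with
  | .assert τ => τ.eval T (prevA init ζ t) = T.vtrue ∧
      ∀ c : C, ζ t (.inr c) = prevA init ζ t (.inr c)
  | .assign c τ => ζ t (.inr c) = τ.eval T (prevA init ζ t) ∧
      ∀ c', c' ≠ c → ζ t (.inr c') = prevA init ζ t (.inr c')
  | .havoc c => ∀ c', c' ≠ c → ζ t (.inr c') = prevA init ζ t (.inr c')

/-- A computation matches a trace of basic statements. -/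
def Matches (T : Thy V F) (init : Assign V I C) (ζ : ℕ → Assign V I C)
    (σ : ℕ → Stmt0 I C F) : Prop :=
  ∀ t, matchesAt T init ζ σ t

/-- Position (index of the statement, offset inside it) of the `j`-th basic statement
in the flattening of a trace of composed statements. -/
def fpos (σ : ℕ → Stmt I C F) : ℕ → ℕ × ℕ
  | 0 => (0, 0)
  | j + 1 =>
    let p := fpos σ j
    if p.2 + 1 < ((σ p.1).1).length then (p.1, p.2 + 1) else (p.1 + 1, 0)

/-- The flattening of a trace of composed statements into basic statements. -/
def flatten (σ : ℕ → Stmt I C F) (j : ℕ) : Stmt0 I C F :=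
  ((σ (fpos σ j).1).1).getD (fpos σ j).2 (((σ (fpos σ j).1).1).head (σ (fpos σ j).1).2)

/-- A computation matches a trace of composed statements (via its flattening). -/
def MatchesC (T : Thy V F) (init : Assign V I C) (ζ : ℕ → Assign V I C)
    (σ : ℕ → Stmt I C F) : Prop :=
  Matches T init ζ (flatten σ)

/-- A trace of composed statements is feasible if some computation matches it. -/
def Feasible (T : Thy V F) (init : Assign V I C) (σ : ℕ → Stmt I C F) : Prop :=
  ∃ ζ, MatchesC T init ζ σ

/-- A trace of basic statements is feasible if some computation matches it. -/
def Feasible0 (T : Thy V F) (init : Assign V I C) (σ : ℕ → Stmt0 I C F) : Prop :=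
  ∃ ζ, Matches T init ζ σ

/-! ### Büchi automata -/

/-- A Büchi automaton. -/
structure Buchi (A : Type) (Q : Type) where
  q0 : Q
  δ : Q → A → Q → Prop
  Acc : Set Q

/-- A run of a Büchi automaton on a word. -/
def Buchi.IsRun {A Q : Type} (B : Buchi A Q) (σ : ℕ → A) (r : ℕ → Q) : Prop :=
  r 0 = B.q0 ∧ ∀ t, B.δ (r t) (σ t) (r (t + 1))

/-- Büchi acceptance: some run visits accepting states infinitely often. -/
def Buchi.Accepts {A Q : Type} (B : Buchi A Q) (σ : ℕ → A) : Prop :=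
  ∃ r, B.IsRun σ r ∧ ∀ n, ∃ m, n ≤ m ∧ r m ∈ B.Acc

/-- A program automaton over basic statements satisfies a TSL(T) formula if every
computation matching an accepted trace satisfies the formula. -/
def SatisfiesTSL {Qp : Type} (T : Thy V F) (init : Assign V I C)
    (P : Buchi (Stmt0 I C F) Qp) (φ : TSL I C F) : Prop :=
  ∀ σ, P.Accepts σ → ∀ ζ, Matches T init ζ σ → φ.sat T init ζ 0

/-! ### The combine construction and the Büchi program product -/

/-- Extended cell set: original cells, inputs-as-cells, and fresh `tmp` cells. -/
abbrev CStar (I C : Type) := (C ⊕ I) ⊕ ℕ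

/-- Embedding of terms over inputs/cells into terms over the extended cell set. -/
def FTerm.embed : FTerm I C F → FTerm Empty (CStar I C) F
  | .inp i => .cell (.inl (.inr i))
  | .cell c => .cell (.inl (.inl c))
  | .app f ts => .app f (ts.attach.map fun t => t.1.embed)
decreasing_by
  have := List.sizeOf_lt_of_mem t.2
  simp only [FTerm.app.sizeOf_spec]
  omega

/-- Embedding of basic statements into statements over the extended cell set. -/
def Stmt0.embed : Stmt0 I C F → Stmt0 Empty (CStar I C) F
  | .assert τ => .assert τ.embed
  | .assign c τ => .assign (.inl (.inl c)) τ.embed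
  | .havoc c => .havoc (.inl (.inl c))

/-- Conjunction of a list of terms (via the theory's conjunction symbol). -/
def conjTerm (T : Thy V F) (O : Ops V F T) :
    List (FTerm Empty (CStar I C) F) → FTerm Empty (CStar I C) F
  | [] => .app O.ftrue []
  | τ :: ts => .app O.fand [τ, conjTerm T O ts]

/-- The `combine` construction: `save_values; s; new_inputs; check_preds_l; check_updates_l`. -/
noncomputable def combine (T : Thy V F) (O : Ops V F T) (ρ : List (FTerm I C F))
    (υ : List (C × FTerm I C F)) (inps : List I)
    (s : List (Stmt0 I C F)) (l : Set (AP I C F)) : Stmt Empty (CStar I C) F :=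
  ⟨(υ.mapIdx fun j u => Stmt0.assign (Sum.inr j) u.2.embed)
    ++ s.map Stmt0.embed
    ++ (inps.map fun i => Stmt0.havoc (Sum.inl (Sum.inr i)))
    ++ [Stmt0.assert (conjTerm T O
          (ρ.map fun τ => if Sum.inl τ ∈ l then τ.embed else .app O.fneg [τ.embed])),
        Stmt0.assert (conjTerm T O
          (υ.mapIdx fun j u =>
            let eqt : FTerm Empty (CStar I C) F :=
              .app O.feq [.cell (Sum.inl (Sum.inl u.1)), .cell (Sum.inr j)]
            if Sum.inr u ∈ l then eqt else .app O.fneg [eqt]))],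
    by simp⟩

/-- Lifting an automaton over basic statements to an automaton over (composed) statements. -/
def liftB {Qp : Type} (P : Buchi (Stmt0 I C F) Qp) : Buchi (Stmt I C F) Qp where
  q0 := P.q0
  δ := fun q w q' => ∃ s, P.δ q s q' ∧ w = ⟨[s], by simp⟩
  Acc := P.Acc

/-- The combined product `P ⊗ A` of a program automaton and a Büchi automaton over
sets of predicate/update terms. -/
noncomputable def product {Qp Qa : Type} (T : Thy V F) (O : Ops V F T)
    (P : Buchi (Stmt I C F) Qp) (A : Buchi (Set (AP I C F)) Qa)
    (ρ : List (FTerm I C F)) (υ : List (C × FTerm I C F)) (inps : List I) :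
    Buchi (Stmt Empty (CStar I C) F) (Qp × Qa) where
  q0 := (P.q0, A.q0)
  δ := fun x w y => ∃ s l, P.δ x.1 s y.1 ∧ A.δ x.2 l y.2 ∧ w = combine T O ρ υ inps s.1 l
  Acc := {x | x.2 ∈ A.Acc}

/-! ### HyperTSL(T) -/

/-- HyperTSL(T) formulas: a quantifier prefix over trace variables, followed by a
quantifier-free formula over trace-indexed inputs and cells. -/
inductive HyperTSL (I C F Pi : Type) : Type where
  | qf : TSL (I × Pi) (C × Pi) F → HyperTSL I C F Pi
  | all : Pi → HyperTSL I C F Pi → HyperTSL I C F Pi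
  | ex : Pi → HyperTSL I C F Pi → HyperTSL I C F Pi

/-- Extension `ζ̂[π, ζ]` of a hyper-computation by a computation for trace variable `π`. -/
noncomputable def extendH (ζh : ℕ → Assign V (I × Pi) (C × Pi)) (π : Pi)
    (ζ : ℕ → Assign V I C) : ℕ → Assign V (I × Pi) (C × Pi) :=
  fun t x =>
    match x with
    | .inl (i, π') => if π' = π then ζ t (.inl i) else ζh t (.inl (i, π'))
    | .inr (c, π') => if π' = π then ζ t (.inr c) else ζh t (.inr (c, π'))

/-- Satisfaction of a HyperTSL(T) formula. -/
noncomputable def HyperTSL.sat (T : Thy V F) (init : Assign V (I × Pi) (C × Pi))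
    (Z : Set (ℕ → Assign V I C)) :
    HyperTSL I C F Pi → (ℕ → Assign V (I × Pi) (C × Pi)) → ℕ → Prop
  | .qf ψ, ζh, t => ψ.sat T init ζh t
  | .all π φ, ζh, t => ∀ ζ ∈ Z, φ.sat T init Z (extendH ζh π ζ) t
  | .ex π φ, ζh, t => ∃ ζ ∈ Z, φ.sat T init Z (extendH ζh π ζ) t

/-- Lift an assignment to a hyper-assignment (every trace gets the same values). -/
def liftInit (init : Assign V I C) : Assign V (I × Pi) (C × Pi) :=
  fun x => match x with
  | .inl (i, _) => init (.inl i)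
  | .inr (c, _) => init (.inr c)

/-- The set of computations matching accepted traces of a program automaton. -/
def Zof {Qp : Type} (T : Thy V F) (init : Assign V I C)
    (P : Buchi (Stmt0 I C F) Qp) : Set (ℕ → Assign V I C) :=
  {ζ | ∃ σ, P.Accepts σ ∧ Matches T init ζ σ}

/-- A program automaton satisfies a HyperTSL(T) formula. -/
noncomputable def SatisfiesHyper {Qp : Type} (T : Thy V F) (init : Assign V I C)
    (P : Buchi (Stmt0 I C F) Qp) (φ : HyperTSL I C F Pi) : Prop :=
  φ.sat T (liftInit init) (Zof T init P) (fun _ => liftInit init) 0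

/-- Renaming of terms: cell `c` becomes `c_π`, input `i` becomes `i_π`. -/
def FTerm.rename (π : Pi) : FTerm I C F → FTerm (I × Pi) (C × Pi) F
  | .inp i => .inp (i, π)
  | .cell c => .cell (c, π)
  | .app f ts => .app f (ts.attach.map fun t => t.1.rename π)
decreasing_by
  have := List.sizeOf_lt_of_mem t.2
  simp only [FTerm.app.sizeOf_spec]
  omega

/-- Renaming of basic statements to a trace variable. -/
def Stmt0.rename (π : Pi) : Stmt0 I C F → Stmt0 (I × Pi) (C × Pi) F
  | .assert τ => .assert (τ.rename π)
  | .assign c τ => .assign (c, π) (τ.rename π)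
  | .havoc c => .havoc (c, π)

/-- The `n`-fold self-composition of a program automaton. -/
def selfComp {Qp : Type} (P : Buchi (Stmt0 I C F) Qp) (n : ℕ) :
    Buchi (Stmt (I × Fin n) (C × Fin n) F) (Fin n → Qp) where
  q0 := fun _ => P.q0
  δ := fun q w q' => ∃ ss : Fin n → Stmt0 I C F,
        (∀ j, P.δ (q j) (ss j) (q' j)) ∧
        w.1 = (List.finRange n).map fun j => (ss j).rename j
  Acc := Set.univ

/-- The `m`-fold self-composition, using the first `m` of `n` trace variables. -/
def selfCompInto {Qp : Type} (P : Buchi (Stmt0 I C F) Qp) (m n : ℕ) (h : m ≤ n) :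
    Buchi (Stmt (I × Fin n) (C × Fin n) F) (Fin m → Qp) where
  q0 := fun _ => P.q0
  δ := fun q w q' => ∃ ss : Fin m → Stmt0 I C F,
        (∀ j, P.δ (q j) (ss j) (q' j)) ∧
        w.1 = (List.finRange m).map fun j => (ss j).rename (Fin.castLE h j)
  Acc := Set.univ

end TSLMC

/-! ### k-feasibility and the automaton `P_k` -/

namespace TSLMC
open scoped Classical
variable {V I C F Pi : Type}

/-- The statement `assert(true)`. -/
def trueStmt (T : Thy V F) (O : Ops V F T) : Stmt I C F :=
  ⟨[.assert (.app O.ftrue [])], by simp⟩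

/-- Extend a finite window of statements by `assert(true)^ω`. -/
def extendTrue (T : Thy V F) (O : Ops V F T) (ss : List (Stmt I C F)) : ℕ → Stmt I C F :=
  fun t => if h : t < ss.length then ss.get ⟨t, h⟩ else trueStmt T O

/-- A finite window of statements is feasible if, followed by `assert(true)^ω`, it is
feasible for some initial assignment. -/
def WinFeasible (T : Thy V F) (O : Ops V F T) (ss : List (Stmt I C F)) : Prop :=
  ∃ init : Assign V I C, Feasible T init (extendTrue T O ss)

/-- The window `σ_j … σ_{j+k-1}` of a trace. -/
def window (σ : ℕ → α) (j k : ℕ) : List α :=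
  (List.range k).map fun i => σ (j + i)

/-- A trace is `k`-feasible if no window of `k` consecutive statements is infeasible
for all initial assignments. -/
def KFeasible (T : Thy V F) (O : Ops V F T) (k : ℕ) (σ : ℕ → Stmt I C F) : Prop :=
  ∀ j, WinFeasible T O (window σ j k)

/-- Chains of transitions of an automaton. -/
def chain {S Qp : Type} (P : Buchi S Qp) : Qp → List (S × Qp) → Prop
  | _, [] => True
  | q, (s, q') :: rest => P.δ q s q' ∧ chain P q' rest

/-- The last state of an alternating state/statement sequence. -/
def lastQ {S Qp : Type} (st : Qp × List (S × Qp)) : Qp :=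
  (st.2.getLast?).elim st.1 Prod.snd

/-- The statements of an alternating state/statement sequence. -/
def stmts {S Qp : Type} (st : Qp × List (S × Qp)) : List S :=
  st.2.map Prod.fst

/-- Valid states of `P_k`: chains of transitions of `P` of length `k-1`, or shorter
ones starting at the initial state. -/
def ValidSt {S Qp : Type} (P : Buchi S Qp) (k : ℕ) (st : Qp × List (S × Qp)) : Prop :=
  chain P st.1 st.2 ∧ (st.2.length = k - 1 ∨ (st.2.length < k - 1 ∧ st.1 = P.q0))

/-- Extend an alternating sequence by a transition, dropping the first entry if the
window is full. -/
def push {S Qp : Type} (k : ℕ) (st : Qp × List (S × Qp)) (s : S) (q' : Qp) :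
    Qp × List (S × Qp) :=
  let l' := st.2 ++ [(s, q')]
  if k ≤ l'.length then
    match l' with
    | [] => (st.1, [])
    | e :: rest => (e.2, rest)
  else (st.1, l')

/-- The automaton `P_k`: `P` without `k`-infeasibility. -/
def Pk {Qp : Type} (T : Thy V F) (O : Ops V F T) (P : Buchi (Stmt I C F) Qp) (k : ℕ) :
    Buchi (Stmt I C F) (Qp × List (Stmt I C F × Qp)) where
  q0 := (P.q0, [])
  δ := fun st s st' => ValidSt P k st ∧ ValidSt P k st' ∧
        ∃ q', P.δ (lastQ st) s q' ∧ WinFeasible T O (stmts st ++ [s]) ∧ st' = push k st s q'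
  Acc := {st | lastQ st ∈ P.Acc}

/-! ### Infeasible accepting cycles and their removal -/

/-- The trace `(s₁ … s_n)^ω` of a cycle. -/
def cycTrace (T : Thy V F) (O : Ops V F T) {Qp : Type}
    (ϱ : List (Qp × Stmt I C F × Qp)) : ℕ → Stmt I C F :=
  fun t => ((ϱ[t % ϱ.length]?).map fun e => e.2.1).getD (trueStmt T O)

/-- `ϱ` is a cycle of transitions of `B`. -/
def IsCycle {S Qp : Type} (B : Buchi S Qp) (ϱ : List (Qp × S × Qp)) : Prop :=
  ϱ ≠ [] ∧ (∀ e ∈ ϱ, B.δ e.1 e.2.1 e.2.2) ∧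
  (∀ i, (h : i + 1 < ϱ.length) →
    (ϱ.get ⟨i + 1, h⟩).1 = (ϱ.get ⟨i, Nat.lt_of_succ_lt h⟩).2.2) ∧
  ∀ h : ϱ ≠ [], (ϱ.getLast h).2.2 = (ϱ.head h).1

/-- An infeasible accepting cycle. -/
def InfAccCycle {Qp : Type} (T : Thy V F) (O : Ops V F T)
    (B : Buchi (Stmt I C F) Qp) (ϱ : List (Qp × Stmt I C F × Qp)) : Prop :=
  IsCycle B ϱ ∧ (∃ e ∈ ϱ, e.1 ∈ B.Acc) ∧
  ∀ init : Assign V I C, ¬ Feasible T init (cycTrace T O ϱ)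

/-- A trace ends with the infinite repetition of the statements of the cycle `ϱ`. -/
def EndsWithCyc {Qp : Type} (T : Thy V F) (O : Ops V F T)
    (σ : ℕ → Stmt I C F) (ϱ : List (Qp × Stmt I C F × Qp)) : Prop :=
  ∃ N, ∀ j, σ (N + j) = cycTrace T O ϱ j

/-- The automaton `A_ϱ`, accepting exactly the traces ending with `ϱ^ω`. -/
def cycAut {Qp : Type} (ϱ : List (Qp × Stmt I C F × Qp)) :
    Buchi (Stmt I C F) (Option (Fin ϱ.length)) where
  q0 := none
  δ := fun st s st' =>
    match st with
    | none => st' = none ∨ ∃ h : ϱ ≠ [],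
        s = (ϱ.head h).2.1 ∧
        st' = some ⟨1 % ϱ.length, Nat.mod_lt _ (List.length_pos_iff.mpr h)⟩
    | some i => s = (ϱ.get i).2.1 ∧
        st' = some ⟨((i : ℕ) + 1) % ϱ.length,
          Nat.mod_lt _ (Nat.lt_of_le_of_lt (Nat.zero_le _) i.isLt)⟩
  Acc := {st | st ≠ none}

/-- A Büchi automaton bundled with its state type. -/
structure BAut (A : Type) : Type 1 where
  Q : Type
  B : Buchi A Q

/-- One removal step: remove (the languages of the automata `A_ϱ` for) a set of
infeasible accepting cycles from an automaton. -/
def RemStep (T : Thy V F) (O : Ops V F T) (x y : BAut (Stmt I C F)) : Prop :=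
  ∃ Cset : Set (List (x.Q × Stmt I C F × x.Q)),
    (∀ ϱ ∈ Cset, InfAccCycle T O x.B ϱ) ∧
    ∀ σ, y.B.Accepts σ ↔ (x.B.Accepts σ ∧ ∀ ϱ ∈ Cset, ¬ EndsWithCyc T O σ ϱ)

/-- `k'` iterations of removing infeasible accepting cycles. -/
def RemChain (T : Thy V F) (O : Ops V F T) :
    ℕ → BAut (Stmt I C F) → BAut (Stmt I C F) → Prop
  | 0, x, y => y = x
  | k' + 1, x, y => ∃ z, RemChain T O k' x z ∧ RemStep T O z y

/-- The universal projection of (a refinement of) the combined product: keep the first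
`m` of the `n` statements of each `combine`-labelled transition. -/
noncomputable def projU {Q' : Type} (T : Thy V F) (O : Ops V F T) {m n : ℕ}
    (_hm : 0 < m) (hmn : m ≤ n)
    (ρ : List (FTerm (I × Fin n) (C × Fin n) F))
    (υ : List ((C × Fin n) × FTerm (I × Fin n) (C × Fin n) F))
    (inps : List (I × Fin n))
    (B : Buchi (Stmt Empty (CStar (I × Fin n) (C × Fin n)) F) Q') :
    Buchi (Stmt (I × Fin n) (C × Fin n) F) Q' where
  q0 := B.q0
  δ := fun q w q' => ∃ (ss : Fin n → Stmt0 (I × Fin n) (C × Fin n) F)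
        (l : Set (AP (I × Fin n) (C × Fin n) F)),
        B.δ q (combine T O ρ υ inps ((List.finRange n).map ss) l) q' ∧
        w.1 = (List.finRange m).map fun j => ss (Fin.castLE hmn j)
  Acc := B.Acc

/-- The formula `∀π₁ … ∀π_m ∃π_{m+1} … ∃π_n. ψ`. -/
def AEform (m n : ℕ) (ψ : TSL (I × Fin n) (C × Fin n) F) : HyperTSL I C F (Fin n) :=
  (List.finRange n).foldr
    (fun (j : Fin n) acc => if (j : ℕ) < m then HyperTSL.all j acc else HyperTSL.ex j acc)
    (.qf ψ)

end TSLMC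
/-! ### Reduced and adapted computations -/

namespace TSLMC
open scoped Classical
variable {V I C F Pi : Type}

/-- The index `ι(t) = B·(t+1) − 3` for blocks of length `B`. -/
def iotaIdx (B t : ℕ) : ℕ := B * (t + 1) - 3

/-- The reduced computation: the combined computation at the indices `ι(t)`,
restricted to the original inputs and cells. -/
def reduceC (B : ℕ) (ζ : ℕ → Assign V Empty (CStar I C)) : ℕ → Assign V I C :=
  fun t x => ζ (iotaIdx B t) (.inr (.inl x.swap))

/-- The reduced computation of trace variable `j`: the combined hyper-computation at
the indices `ι(t)`, restricted to the `j`-indexed inputs and cells, renamed back. -/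
def reduceTr {n : ℕ} (B : ℕ) (j : Fin n)
    (ζ : ℕ → Assign V Empty (CStar (I × Fin n) (C × Fin n))) : ℕ → Assign V I C :=
  fun t x => ζ (iotaIdx B t)
    (.inr (.inl (match x with | .inl i => .inr (i, j) | .inr c => .inl (c, j))))

/-- Assembling a hyper-computation from one computation per trace variable
(`∅[π₁, ζ₁]…[π_n, ζ_n]`). -/
def assembleH {n : ℕ} (red : Fin n → ℕ → Assign V I C) :
    ℕ → Assign V (I × Fin n) (C × Fin n) :=
  fun t x => match x with
  | .inl (i, j) => red j t (.inl i)
  | .inr (c, j) => red j t (.inr c)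

/-- The adapted computation `ζ̃` of a computation `ζ`. -/
noncomputable def adapt (T : Thy V F) (upds : List (C × FTerm I C F)) (inps : List I)
    (init : Assign V I C) (initC : Assign V Empty (CStar I C))
    (ζ : ℕ → Assign V I C) : ℕ → Assign V Empty (CStar I C) := fun idx x =>
  let m := upds.length
  let k := inps.length
  let b := idx / (m + k + 3)
  let i := idx % (m + k + 3)
  let newTmp : ℕ → V := fun p =>
    ((upds[p]?).map fun u => u.2.eval T (prevA init ζ b)).getD (initC (.inr (.inr p)))
  let oldTmp : ℕ → V := fun p =>
    match b with
    | 0 => initC (.inr (.inr p))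
    | b' + 1 => ((upds[p]?).map fun u => u.2.eval T (prevA init ζ b')).getD
        (initC (.inr (.inr p)))
  match x with
  | .inl e => e.elim
  | .inr (.inr p) => if i < m then (if p ≤ i then newTmp p else oldTmp p) else newTmp p
  | .inr (.inl (.inl c)) => if i < m then prevA init ζ b (.inr c) else ζ b (.inr c)
  | .inr (.inl (.inr ii)) =>
      if i < m + 1 then prevA init ζ b (.inl ii)
      else if i ≤ m + k then
        (if inps.idxOf ii < i - m then ζ b (.inl ii) else prevA init ζ b (.inl ii))
      else ζ b (.inl ii)

/-- The adapted hyper-computation of computations `ζ_{π₁}, …, ζ_{π_n}`. -/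
noncomputable def hadapt {n : ℕ} (T : Thy V F)
    (upds : List ((C × Fin n) × FTerm (I × Fin n) (C × Fin n) F))
    (inps : List (I × Fin n)) (init : Assign V I C)
    (initC : Assign V Empty (CStar (I × Fin n) (C × Fin n)))
    (ζs : Fin n → ℕ → Assign V I C) :
    ℕ → Assign V Empty (CStar (I × Fin n) (C × Fin n)) := fun idx x =>
  let m := upds.length
  let k := inps.length
  let b := idx / (m + n + k + 2)
  let i := idx % (m + n + k + 2)
  let ζ' : ℕ → Assign V (I × Fin n) (C × Fin n) := assembleH ζs
  let hinit : Assign V (I × Fin n) (C × Fin n) := liftInit init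
  let newTmp : ℕ → V := fun p =>
    ((upds[p]?).map fun u => u.2.eval T (prevA hinit ζ' b)).getD (initC (.inr (.inr p)))
  let oldTmp : ℕ → V := fun p =>
    match b with
    | 0 => initC (.inr (.inr p))
    | b' + 1 => ((upds[p]?).map fun u => u.2.eval T (prevA hinit ζ' b')).getD
        (initC (.inr (.inr p)))
  match x with
  | .inl e => e.elim
  | .inr (.inr p) => if i < m then (if p ≤ i then newTmp p else oldTmp p) else newTmp p
  | .inr (.inl (.inl cj)) =>
      if i < m then prevA hinit ζ' b (.inr cj)
      else if i < m + n then
        (if (cj.2 : ℕ) < i - m + 1 then ζs cj.2 b (.inr cj.1)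
         else prevA hinit ζ' b (.inr cj))
      else ζ' b (.inr cj)
  | .inr (.inl (.inr ij)) =>
      if i < m + n then prevA hinit ζ' b (.inl ij)
      else if i < m + n + k then
        (if inps.idxOf ij < i - (m + n) + 1 then ζ' b (.inl ij)
         else prevA hinit ζ' b (.inl ij))
      else ζ' b (.inl ij)

/-- The composed trace `σ_t = ((σ_{π₁})_{π₁})_t; … ; ((σ_{π_n})_{π_n})_t`. -/
def composedTrace {n : ℕ} (σs : Fin n → ℕ → Stmt0 I C F) (t : ℕ) :
    List (Stmt0 (I × Fin n) (C × Fin n) F) :=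
  (List.finRange n).map fun j => (σs j t).rename j

/-- The composed trace, as a trace of (nonempty) program statements. -/
def composedStmt {n : ℕ} (hn : 0 < n) (σs : Fin n → ℕ → Stmt0 I C F) (t : ℕ) :
    Stmt (I × Fin n) (C × Fin n) F :=
  ⟨composedTrace σs t, by
    intro h
    have := congrArg List.length h
    simp [composedTrace] at this
    omega⟩

end TSLMC

namespace TSLMC
open scoped Classical

section Helpers
variable {V I C F : Type}

theorem FTerm.eval_app (T : Thy V F) (a : Assign V I C) (f : F) (ts : List (FTerm I C F)) :
    (FTerm.app f ts).eval T a = T.ε f (ts.map (FTerm.eval T a)) := by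
  rw [FTerm.eval, List.attach_map_val]

theorem FTerm.rename_app {Pi : Type} (π : Pi) (f : F) (ts : List (FTerm I C F)) :
    (FTerm.app f ts).rename π = FTerm.app f (ts.map (FTerm.rename π)) := by
  rw [FTerm.rename, List.attach_map_val]

theorem FTerm.embed_app (f : F) (ts : List (FTerm I C F)) :
    (FTerm.app f ts).embed = FTerm.app f (ts.map FTerm.embed) := by
  rw [FTerm.embed, List.attach_map_val]

/-- The pullback map on signature used by `reduceTr`. -/
def trPull {n : ℕ} (j : Fin n) : I ⊕ C → (C × Fin n) ⊕ (I × Fin n) :=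
  fun x => match x with
  | .inl i => .inr (i, j)
  | .inr c => .inl (c, j)

theorem eval_embed_rename {n : ℕ} (T : Thy V F) (j : Fin n)
    (a : Assign V Empty (CStar (I × Fin n) (C × Fin n))) :
    ∀ τ : FTerm I C F,
      ((τ.rename j).embed).eval T a
        = τ.eval T (fun x => a (.inr (.inl (trPull j x)))) := by
  suffices H : ∀ (N : ℕ) (τ : FTerm I C F), sizeOf τ ≤ N →
      ((τ.rename j).embed).eval T a
        = τ.eval T (fun x => a (.inr (.inl (trPull j x)))) by
    intro τ; exact H (sizeOf τ) τ le_rfl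
  intro N
  induction N with
  | zero => intro τ hτ; cases τ <;> simp at hτ
  | succ N ih =>
    intro τ hτ
    cases τ with
    | inp i => simp [FTerm.rename, FTerm.embed, FTerm.eval, trPull]
    | cell c => simp [FTerm.rename, FTerm.embed, FTerm.eval, trPull]
    | app f ts =>
      rw [FTerm.rename_app, FTerm.embed_app, FTerm.eval_app, FTerm.eval_app,
        List.map_map, List.map_map]
      congr 1
      refine List.map_congr_left ?_
      intro t ht
      have hs := List.sizeOf_lt_of_mem ht
      have : sizeOf t ≤ N := by
        simp only [FTerm.app.sizeOf_spec] at hτ; omega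
      exact ih t this

theorem fpos_eq (σ : ℕ → Stmt I C F) (B : ℕ) (hB : 0 < B)
    (hlen : ∀ t, ((σ t).1).length = B) (s : ℕ) : fpos σ s = (s / B, s % B) := by
  induction s with
  | zero => simp [fpos]
  | succ s ih =>
    rw [fpos, ih]
    have h1 : s % B < B := Nat.mod_lt _ hB
    have h2 : B * (s / B) + s % B = s := Nat.div_add_mod s B
    by_cases hc : s % B + 1 < B
    · simp only [hlen, hc, if_true]
      have e : s + 1 = (s % B + 1) + B * (s / B) := by omega
      have hd : (s + 1) / B = s / B := by
        rw [e, Nat.add_mul_div_left _ _ hB, Nat.div_eq_of_lt hc, Nat.zero_add]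
      have hm : (s + 1) % B = s % B + 1 := by
        rw [e, Nat.add_mul_mod_self_left, Nat.mod_eq_of_lt hc]
      rw [hd, hm]
    · simp only [hlen, hc, if_false]
      have e' : B * (s / B + 1) = B * (s / B) + B := by ring
      have e : s + 1 = 0 + B * (s / B + 1) := by omega
      have hd : (s + 1) / B = s / B + 1 := by
        rw [e, Nat.add_mul_div_left _ _ hB, Nat.div_eq_of_lt hB, Nat.zero_add]
      have hm : (s + 1) % B = 0 := by
        rw [e, Nat.add_mul_mod_self_left, Nat.zero_mod]
      rw [hd, hm]

theorem flatten_eq_getD (σ : ℕ → Stmt I C F) (B : ℕ) (hB : 0 < B)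
    (hlen : ∀ t, ((σ t).1).length = B) (s : ℕ) :
    flatten σ s = ((σ (s / B)).1).getD (s % B) (((σ (s / B)).1).head (σ (s / B)).2) := by
  simp only [flatten, fpos_eq σ B hB hlen]

theorem divmod_eq (B t r : ℕ) (hB : 0 < B) (hr : r < B) :
    (B * t + r) / B = t ∧ (B * t + r) % B = r := by
  constructor
  · rw [Nat.add_comm, Nat.add_mul_div_left _ _ hB, Nat.div_eq_of_lt hr, Nat.zero_add]
  · rw [Nat.add_comm, Nat.add_mul_mod_self_left, Nat.mod_eq_of_lt hr]

section CombineGet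

variable (T : Thy V F) (O : Ops V F T) (ρ : List (FTerm I C F))
  (υ : List (C × FTerm I C F)) (inps : List I)
  (s : List (Stmt0 I C F)) (l : Set (AP I C F)) (d : Stmt0 Empty (CStar I C) F)

theorem combine_len : ((combine T O ρ υ inps s l).1).length
    = υ.length + s.length + inps.length + 2 := by
  simp [combine]; omega

theorem combine_getD_tmp {r : ℕ} (hr : r < υ.length) :
    ((combine T O ρ υ inps s l).1).getD r d
      = Stmt0.assign (Sum.inr r) ((υ.get ⟨r, hr⟩).2.embed) := by
  simp only [combine, List.getD_eq_getElem?_getD]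
  rw [List.getElem?_append_left (by simp; omega), List.getElem?_append_left (by simp; omega),
    List.getElem?_append_left (by simpa using hr), List.getElem?_mapIdx,
    List.getElem?_eq_getElem hr]
  simp

theorem combine_getD_stmt {r : ℕ} (hr : r < s.length) :
    ((combine T O ρ υ inps s l).1).getD (υ.length + r) d
      = Stmt0.embed (s.get ⟨r, hr⟩) := by
  simp only [combine, List.getD_eq_getElem?_getD]
  rw [List.getElem?_append_left (by simp; omega), List.getElem?_append_left (by simp; omega),
    List.getElem?_append_right (by simp), List.getElem?_map,
    show υ.length + r - (υ.mapIdx (fun j (u : C × FTerm I C F) =>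
        Stmt0.assign (Sum.inr j) u.2.embed)).length = r by simp,
    List.getElem?_eq_getElem hr]
  simp

theorem combine_getD_inp {r : ℕ} (hr : r < inps.length) :
    ((combine T O ρ υ inps s l).1).getD (υ.length + s.length + r) d
      = Stmt0.havoc (Sum.inl (Sum.inr (inps.get ⟨r, hr⟩))) := by
  simp only [combine, List.getD_eq_getElem?_getD]
  rw [List.getElem?_append_left (by simp; omega),
    List.getElem?_append_right (by simp), List.getElem?_map,
    show υ.length + s.length + r
        - ((υ.mapIdx (fun j (u : C × FTerm I C F) => Stmt0.assign (Sum.inr j) u.2.embed))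
          ++ s.map Stmt0.embed).length = r by simp,
    List.getElem?_eq_getElem hr]
  simp

theorem combine_getD_assert {r : ℕ} (hr1 : υ.length + s.length + inps.length ≤ r)
    (hr2 : r < υ.length + s.length + inps.length + 2) :
    ∃ τ, ((combine T O ρ υ inps s l).1).getD r d = Stmt0.assert τ := by
  simp only [combine, List.getD_eq_getElem?_getD]
  rw [List.getElem?_append_right (by simp; omega)]
  have hL : ((υ.mapIdx (fun j (u : C × FTerm I C F) => Stmt0.assign (Sum.inr j) u.2.embed))
      ++ s.map Stmt0.embed
      ++ inps.map fun i => Stmt0.havoc (Sum.inl (Sum.inr i))).length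
      = υ.length + s.length + inps.length := by simp; omega
  rw [hL]
  rcases (show r - (υ.length + s.length + inps.length) = 0 ∨
      r - (υ.length + s.length + inps.length) = 1 from by omega) with h0 | h0 <;> rw [h0]
  · exact ⟨_, rfl⟩
  · exact ⟨_, rfl⟩

end CombineGet

section MatchHelp

variable (T : Thy V F) (init : Assign V I C) (ζ : ℕ → Assign V I C)
  (σ : ℕ → Stmt0 I C F) (t : ℕ)

theorem matchesAt_assert' {τ} (hσ : σ t = Stmt0.assert τ)
    (hm : matchesAt T init ζ σ t) :
    τ.eval T (prevA init ζ t) = T.vtrue ∧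
      ∀ c : C, ζ t (.inr c) = prevA init ζ t (.inr c) := by
  unfold matchesAt at hm; rw [hσ] at hm; exact hm

theorem matchesAt_assign' {c τ} (hσ : σ t = Stmt0.assign c τ)
    (hm : matchesAt T init ζ σ t) :
    ζ t (.inr c) = τ.eval T (prevA init ζ t) ∧
      ∀ c', c' ≠ c → ζ t (.inr c') = prevA init ζ t (.inr c') := by
  unfold matchesAt at hm; rw [hσ] at hm; exact hm

theorem matchesAt_havoc' {c} (hσ : σ t = Stmt0.havoc c)
    (hm : matchesAt T init ζ σ t) :
    ∀ c', c' ≠ c → ζ t (.inr c') = prevA init ζ t (.inr c') := by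
  unfold matchesAt at hm; rw [hσ] at hm; exact hm

theorem matchesAt_of_assert {τ} (hσ : σ t = Stmt0.assert τ)
    (H : τ.eval T (prevA init ζ t) = T.vtrue ∧
      ∀ c : C, ζ t (.inr c) = prevA init ζ t (.inr c)) :
    matchesAt T init ζ σ t := by
  unfold matchesAt; rw [hσ]; exact H

theorem matchesAt_of_assign {c τ} (hσ : σ t = Stmt0.assign c τ)
    (H : ζ t (.inr c) = τ.eval T (prevA init ζ t) ∧
      ∀ c', c' ≠ c → ζ t (.inr c') = prevA init ζ t (.inr c')) :
    matchesAt T init ζ σ t := by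
  unfold matchesAt; rw [hσ]; exact H

theorem matchesAt_of_havoc {c} (hσ : σ t = Stmt0.havoc c)
    (H : ∀ c', c' ≠ c → ζ t (.inr c') = prevA init ζ t (.inr c')) :
    matchesAt T init ζ σ t := by
  unfold matchesAt; rw [hσ]; exact H

theorem prev_unchanged (x : C) (a b : ℕ) (hab : a ≤ b)
    (H : ∀ s, a ≤ s → s < b → ζ s (.inr x) = prevA init ζ s (.inr x)) :
    prevA init ζ b (.inr x) = prevA init ζ a (.inr x) := by
  induction b with
  | zero => obtain rfl := Nat.le_zero.mp hab; rfl
  | succ b ih =>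
    rcases Nat.lt_or_ge a (b + 1) with hlt | hge
    · have hb : a ≤ b := Nat.lt_succ_iff.mp hlt
      have he : prevA init ζ (b + 1) (.inr x) = ζ b (.inr x) := rfl
      rw [he, H b hb (Nat.lt_succ_self b), ih hb fun s hs1 hs2 => H s hs1 (by omega)]
    · have : a = b + 1 := by omega
      rw [this]

end MatchHelp

theorem composedTrace_get {n : ℕ} (σs : Fin n → ℕ → Stmt0 I C F) (t : ℕ)
    (q : ℕ) (hq : q < n) (hq' : q < (composedTrace σs t).length) :
    (composedTrace σs t).get ⟨q, hq'⟩ = (σs ⟨q, hq⟩ t).rename ⟨q, hq⟩ := by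
  simp only [composedTrace, List.get_eq_getElem, List.getElem_map, List.getElem_finRange]
  rfl

theorem composedTrace_length {n : ℕ} (σs : Fin n → ℕ → Stmt0 I C F) (t : ℕ) :
    (composedTrace σs t).length = n := by simp [composedTrace]

theorem step_nonmod {n : ℕ} (T : Thy V F) (O : Ops V F T)
    (initC : Assign V Empty (CStar (I × Fin n) (C × Fin n)))
    (ρ : List (FTerm (I × Fin n) (C × Fin n) F))
    (υ : List ((C × Fin n) × FTerm (I × Fin n) (C × Fin n) F))
    (inps : List (I × Fin n))
    (σs : Fin n → ℕ → Stmt0 I C F) (X : ℕ → Set (AP (I × Fin n) (C × Fin n) F))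
    (ζ : ℕ → Assign V Empty (CStar (I × Fin n) (C × Fin n)))
    (h : MatchesC T initC ζ (fun t => combine T O ρ υ inps (composedTrace σs t) (X t)))
    (x : (C × Fin n) ⊕ (I × Fin n)) (s : ℕ)
    (hx1 : ∀ (c : C) (p : Fin n), x = .inl (c, p) →
      s % (inps.length + υ.length + n + 2) ≠ υ.length + (p : ℕ))
    (hx2 : ∀ ij : I × Fin n, x = .inr ij →
      s % (inps.length + υ.length + n + 2) < υ.length + n ∨
      υ.length + n + inps.length ≤ s % (inps.length + υ.length + n + 2)) :
    ζ s (.inr (.inl x)) = prevA initC ζ s (.inr (.inl x)) := by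
  set B := inps.length + υ.length + n + 2 with hBdef
  have hB : 0 < B := by omega
  set σc := fun t => combine T O ρ υ inps (composedTrace σs t) (X t) with hσc
  have hlen : ∀ t, ((σc t).1).length = B := by
    intro t
    rw [hσc]
    simp only [combine_len, composedTrace_length]
    omega
  have hflat := flatten_eq_getD σc B hB hlen s
  have hm := h s
  set r := s % B with hrdef
  have hrB : r < B := Nat.mod_lt _ hB
  set t := s / B with htdef
  set m := υ.length with hmdef
  set k := inps.length with hkdef
  set d := ((σc t).1).head (σc t).2 with hddef
  by_cases h1 : r < m
  · have hst : flatten σc s = Stmt0.assign (Sum.inr r) ((υ.get ⟨r, h1⟩).2.embed) := by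
      rw [hflat]; exact combine_getD_tmp T O ρ υ inps _ _ _ h1
    exact (matchesAt_assign' T initC ζ _ s hst hm).2 (.inl x) (by simp)
  · by_cases h2 : r < m + n
    · have hp : r - m < n := by omega
      have hget := combine_getD_stmt T O ρ υ inps (composedTrace σs t) (X t) d
        (show r - m < (composedTrace σs t).length by rw [composedTrace_length]; omega)
      rw [composedTrace_get σs t (r - m) hp] at hget
      rw [show m + (r - m) = r by omega] at hget
      have hst : flatten σc s
          = Stmt0.embed (Stmt0.rename (⟨r - m, hp⟩ : Fin n) (σs ⟨r - m, hp⟩ t)) :=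
        hflat.trans hget
      cases hσ : σs ⟨r - m, hp⟩ t with
      | assert τ =>
        rw [hσ] at hst
        exact (matchesAt_assert' T initC ζ _ s hst hm).2 (.inl x)
      | assign c τ =>
        rw [hσ] at hst
        refine (matchesAt_assign' T initC ζ _ s hst hm).2 (.inl x) ?_
        rcases x with ⟨c', p'⟩ | ij
        · have hne := hx1 c' p' rfl
          intro hcon
          simp only [Stmt0.rename, Stmt0.embed, Sum.inl.injEq, Prod.mk.injEq] at hcon
          apply hne
          have : (p' : ℕ) = r - m := by rw [hcon.2]
          omega
        · simp [Stmt0.rename, Stmt0.embed]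
      | havoc c =>
        rw [hσ] at hst
        refine (matchesAt_havoc' T initC ζ _ s hst hm) (.inl x) ?_
        rcases x with ⟨c', p'⟩ | ij
        · have hne := hx1 c' p' rfl
          intro hcon
          simp only [Stmt0.rename, Stmt0.embed, Sum.inl.injEq, Prod.mk.injEq] at hcon
          apply hne
          have : (p' : ℕ) = r - m := by rw [hcon.2]
          omega
        · simp [Stmt0.rename, Stmt0.embed]
    · by_cases h3 : r < m + n + k
      · have hq : r - (m + n) < k := by omega
        have hget := combine_getD_inp T O ρ υ inps (composedTrace σs t) (X t) d hq
        rw [composedTrace_length] at hget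
        rw [show m + n + (r - (m + n)) = r by omega] at hget
        have hst : flatten σc s
            = Stmt0.havoc (Sum.inl (Sum.inr (inps.get ⟨r - (m + n), hq⟩))) :=
          hflat.trans hget
        refine (matchesAt_havoc' T initC ζ _ s hst hm) (.inl x) ?_
        rcases x with ⟨c', p'⟩ | ij
        · simp
        · rcases hx2 ij rfl with hcase | hcase <;> omega
      · obtain ⟨τ, hget⟩ := combine_getD_assert T O ρ υ inps (composedTrace σs t) (X t) d
          (r := r)
          (by rw [composedTrace_length]; omega)
          (by rw [composedTrace_length]; omega)
        have hst : flatten σc s = Stmt0.assert τ := hflat.trans hget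
        exact (matchesAt_assert' T initC ζ _ s hst hm).2 (.inl x)

end Helpers

theorem hyper_reduced_matches
    {V I C F : Type} (T : Thy V F) (O : Ops V F T) {n : ℕ}
    (init : Assign V I C)
    (initC : Assign V Empty (CStar (I × Fin n) (C × Fin n)))
    (hic : ∀ p : C × Fin n, initC (.inr (.inl (.inl p))) = init (.inr p.1))
    (hii : ∀ p : I × Fin n, initC (.inr (.inl (.inr p))) = init (.inl p.1))
    (ρ : List (FTerm (I × Fin n) (C × Fin n) F))
    (υ : List ((C × Fin n) × FTerm (I × Fin n) (C × Fin n) F))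
    (inps : List (I × Fin n)) (hinps : ∀ p : I × Fin n, p ∈ inps) (hnd : inps.Nodup)
    (σs : Fin n → ℕ → Stmt0 I C F) (X : ℕ → Set (AP (I × Fin n) (C × Fin n) F))
    (ζ : ℕ → Assign V Empty (CStar (I × Fin n) (C × Fin n)))
    (h : MatchesC T initC ζ (fun t => combine T O ρ υ inps (composedTrace σs t) (X t))) :
    ∀ j : Fin n,
      Matches T init (reduceTr (inps.length + υ.length + n + 2) j ζ) (σs j) := by
  intro j t
  have hn : 0 < n := j.pos
  have hj : (j : ℕ) < n := j.isLt
  set B := inps.length + υ.length + n + 2 with hBdef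
  set m := υ.length with hmdef
  set k := inps.length with hkdef
  have hB : 0 < B := by omega
  set σc := fun t => combine T O ρ υ inps (composedTrace σs t) (X t) with hσc
  have hlen : ∀ t, ((σc t).1).length = B := by
    intro t
    rw [hσc]
    simp only [combine_len, composedTrace_length]
    omega
  set red := reduceTr B j ζ with hred
  set s0 := B * t + (m + (j : ℕ)) with hs0
  have hdm0 := divmod_eq B t (m + (j : ℕ)) hB (by omega)
  have hmul : ∀ a : ℕ, B * (a + 1) = B * a + B := by intro a; ring
  have hι : ∀ a : ℕ, iotaIdx B a = B * a + (m + n + k - 1) := by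
    intro a
    have := hmul a
    unfold iotaIdx
    omega
  -- the nonmod applications
  have hnm : ∀ (x : (C × Fin n) ⊕ (I × Fin n)) (q rr : ℕ), rr < B →
      (∀ (c : C) (p : Fin n), x = .inl (c, p) → rr ≠ m + (p : ℕ)) →
      (∀ ij : I × Fin n, x = .inr ij → rr < m + n ∨ m + n + k ≤ rr) →
      ζ (B * q + rr) (.inr (.inl x)) = prevA initC ζ (B * q + rr) (.inr (.inl x)) := by
    intro x q rr hrr hc1 hc2
    have hdm := divmod_eq B q rr hB hrr
    exact step_nonmod T O initC ρ υ inps σs X ζ h x (B * q + rr)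
      (fun c p hx => by rw [← hBdef, hdm.2]; exact hc1 c p hx)
      (fun ij hx => by rw [← hBdef, hdm.2]; exact hc2 ij hx)
  -- claim: the previous assignment seen by trace j's statement agrees with
  -- the previous assignment of the reduced computation
  have hprev : ∀ x : I ⊕ C,
      prevA initC ζ s0 (.inr (.inl (trPull j x))) = prevA init red t x := by
    intro x
    have hxc1 : ∀ (c : C) (p : Fin n), trPull j x = .inl (c, p) → (p : ℕ) = (j : ℕ) := by
      intro c p hx
      cases x with
      | inl i => simp [trPull] at hx
      | inr c' => simp [trPull] at hx; exact congrArg Fin.val hx.2.symm ▸ rfl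
    cases t with
    | zero =>
      have hu := prev_unchanged initC ζ (.inl (trPull j x)) 0 s0 (by omega)
        (fun s' h0 hlt => by
          have hlt' : s' < m + (j : ℕ) := by omega
          have : s' = B * 0 + s' := by omega
          rw [this]
          exact hnm (trPull j x) 0 s' (by omega)
            (fun c p hx => by have := hxc1 c p hx; omega)
            (fun ij hx => by left; omega))
      rw [hu]
      cases x with
      | inl i => exact hii (i, j)
      | inr c => exact hic (c, j)
    | succ t' =>
      have ha : iotaIdx B t' + 1 ≤ s0 := by
        rw [hι t']
        have := hmul t'
        omega
      have hu := prev_unchanged initC ζ (.inl (trPull j x)) (iotaIdx B t' + 1) s0 ha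
        (fun s' hlo hhi => by
          rw [hι t'] at hlo
          by_cases hcse : s' < B * (t' + 1)
          · have he : s' = B * t' + (s' - B * t') := by
              have := hmul t'
              omega
            rw [he]
            refine hnm (trPull j x) t' (s' - B * t') (by have := hmul t'; omega) ?_ ?_
            · intro c p hx
              have := hxc1 c p hx
              omega
            · intro ij hx
              right
              omega
          · have he : s' = B * (t' + 1) + (s' - B * (t' + 1)) := by omega
            have hhi' : s' - B * (t' + 1) < m + (j : ℕ) := by
              rw [hs0] at hhi
              omega
            rw [he]
            refine hnm (trPull j x) (t' + 1) (s' - B * (t' + 1)) (by omega) ?_ ?_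
            · intro c p hx
              have := hxc1 c p hx
              omega
            · intro ij hx
              left
              omega)
      rw [hu]
      have he1 : prevA initC ζ (iotaIdx B t' + 1) (.inr (.inl (trPull j x)))
          = ζ (iotaIdx B t') (.inr (.inl (trPull j x))) := rfl
      rw [he1]
      have he2 : ζ (iotaIdx B t') (.inr (.inl (trPull j x))) = red t' x := by
        cases x <;> rfl
      rw [he2]
      rfl
  -- claim: the reduced value at time t equals the value just after trace j's statement
  have hpost : ∀ c : C, red t (.inr c) = ζ s0 (.inr (.inl (.inl (c, j)))) := by
    intro c
    have hab : s0 + 1 ≤ iotaIdx B t + 1 := by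
      rw [hι t]
      omega
    have hu := prev_unchanged initC ζ (.inl (.inl (c, j))) (s0 + 1) (iotaIdx B t + 1) hab
      (fun s' hlo hhi => by
        rw [hι t] at hhi
        have he : s' = B * t + (s' - B * t) := by omega
        rw [he]
        refine hnm (.inl (c, j)) t (s' - B * t) (by omega) ?_ ?_
        · intro c' p hx
          have : (p : ℕ) = (j : ℕ) := by
            simp only [Sum.inl.injEq, Prod.mk.injEq] at hx
            rw [hx.2]
          omega
        · intro ij hx
          simp at hx)
    have he2 : red t (.inr c) = prevA initC ζ (iotaIdx B t + 1) (.inr (.inl (.inl (c, j)))) :=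
      rfl
    rw [he2, hu]
    rfl
  -- the statement executed at step s0
  have hstmt : flatten σc s0 = Stmt0.embed (Stmt0.rename j (σs j t)) := by
    have hflat := flatten_eq_getD σc B hB hlen s0
    rw [hdm0.1, hdm0.2] at hflat
    have hget := combine_getD_stmt T O ρ υ inps (composedTrace σs t) (X t)
      (((σc t).1).head (σc t).2)
      (show (j : ℕ) < (composedTrace σs t).length by rw [composedTrace_length]; omega)
    rw [composedTrace_get σs t (j : ℕ) hj] at hget
    have hjeq : (⟨(j : ℕ), hj⟩ : Fin n) = j := by ext; rfl
    rw [hjeq] at hget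
    exact hflat.trans hget
  have hma := h s0
  have hfun : (fun x => prevA initC ζ s0 (.inr (.inl (trPull j x)))) = prevA init red t :=
    funext hprev
  cases hS : σs j t with
  | assert τ =>
    rw [hS] at hstmt
    have hmm := matchesAt_assert' T initC ζ _ s0 hstmt hma
    refine matchesAt_of_assert T init red (σs j) t hS ⟨?_, ?_⟩
    · have h1 := hmm.1
      rw [eval_embed_rename T j (prevA initC ζ s0) τ, hfun] at h1
      exact h1
    · intro c
      rw [hpost c, hmm.2 (.inl (.inl (c, j)))]
      exact hprev (.inr c)
  | assign c τ =>
    rw [hS] at hstmt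
    have hmm := matchesAt_assign' T initC ζ _ s0 hstmt hma
    refine matchesAt_of_assign T init red (σs j) t hS ⟨?_, ?_⟩
    · have h1 := hmm.1
      rw [eval_embed_rename T j (prevA initC ζ s0) τ, hfun] at h1
      rw [hpost c]
      exact h1
    · intro c' hc'
      rw [hpost c', hmm.2 (.inl (.inl (c', j)))
        (by simp only [Stmt0.rename, Stmt0.embed, ne_eq, Sum.inl.injEq, Prod.mk.injEq]
            intro hcon
            exact hc' hcon.1)]
      exact hprev (.inr c')
  | havoc c =>
    rw [hS] at hstmt
    have hmm := matchesAt_havoc' T initC ζ _ s0 hstmt hma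
    refine matchesAt_of_havoc T init red (σs j) t hS ?_
    intro c' hc'
    rw [hpost c', hmm (.inl (.inl (c', j)))
      (by simp only [Stmt0.rename, Stmt0.embed, ne_eq, Sum.inl.injEq, Prod.mk.injEq]
          intro hcon
          exact hc' hcon.1)]
    exact hprev (.inr c')

end TSLMC
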